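/- (Soundness of the disjoint-core lower bound used in phase 1 of the msu3 algorithm.) Let C : Fin m → Clause be a CNF formula, and suppose S : Fin k → Finset (Fin m) is a family of pairwise disjoint sets of clause indices such that for each j the subformula { C i | i ∈ S j } is unsatisfiable. Then every assignment α falsifies at least one clause in each S j, and hence MaxSat(C) ≤ m − k. -/

import Mathlib

attribute [local instance] Classical.propDecidable

/-- A clause is a finite set of literals; a literal is a pair (variable, polarity). -/
abbrev Clause (V : Type*) := Finset (V × Bool)

/-- An assignment satisfies a clause iff it satisfies at least one of its literals. -/
def SatClause {V : Type*} (α : V → Bool) (ω : Clause V) : Prop :=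
  ∃ l ∈ ω, α l.1 = l.2

/-- The number of clauses of the CNF formula `C` satisfied by the assignment `α`. -/
noncomputable def numSat {V : Type*} {m : ℕ} (C : Fin m → Clause V) (α : V → Bool) : ℕ :=
  (Finset.univ.filter (fun i => SatClause α (C i))).card

/-- `MaxSat(C)`: the maximum, over all assignments `α`, of the number of satisfied clauses. -/
noncomputable def maxSat {V : Type*} {m : ℕ} (C : Fin m → Clause V) : ℕ :=
  sSup { n | ∃ α : V → Bool, n = numSat C α }

/-- Soundness of the disjoint-core lower bound: if `S j` are pairwise disjoint sets of clause
indices, each inducing an unsatisfiable subformula, then every assignment falsifies at least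
one clause in each `S j`, and hence `MaxSat(C) ≤ m - k`. -/
theorem stmt5 {V : Type*} {m k : ℕ} (C : Fin m → Clause V)
    (S : Fin k → Finset (Fin m))
    (hdisj : ∀ j j' : Fin k, j ≠ j' → Disjoint (S j) (S j'))
    (hunsat : ∀ j : Fin k, ¬ ∃ α : V → Bool, ∀ i ∈ S j, SatClause α (C i)) :
    (∀ (α : V → Bool) (j : Fin k), ∃ i ∈ S j, ¬ SatClause α (C i)) ∧
    maxSat C ≤ m - k := by
  have hfals : ∀ (α : V → Bool) (j : Fin k), ∃ i ∈ S j, ¬ SatClause α (C i) := by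
    intro α j
    by_contra h
    push_neg at h
    exact hunsat j ⟨α, fun i hi => h i hi⟩
  refine ⟨hfals, ?_⟩
  have hbound : ∀ α : V → Bool, numSat C α ≤ m - k := by
    intro α
    choose f hfS hfns using hfals α
    have hinj : Function.Injective f := by
      intro j j' h
      by_contra hne
      exact Finset.disjoint_left.mp (hdisj j j' hne) (hfS j) (h ▸ hfS j')
    have hsub : (Finset.univ.image f) ⊆ Finset.univ.filter (fun i => ¬ SatClause α (C i)) := by
      intro i hi
      simp only [Finset.mem_image] at hi
      obtain ⟨j, _, rfl⟩ := hi
      simp [hfns j]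
    have hk : k ≤ (Finset.univ.filter (fun i => ¬ SatClause α (C i))).card := by
      calc k = (Finset.univ.image f).card := by
              rw [Finset.card_image_of_injective _ hinj, Finset.card_univ, Fintype.card_fin]
        _ ≤ _ := Finset.card_le_card hsub
    have hsplit : numSat C α + (Finset.univ.filter (fun i => ¬ SatClause α (C i))).card = m := by
      rw [numSat, Finset.card_filter_add_card_filter_not, Finset.card_univ,
        Fintype.card_fin]
    omega
  have hne : { n | ∃ α : V → Bool, n = numSat C α }.Nonempty :=
    ⟨numSat C (fun _ => true), fun _ => true, rfl⟩
  apply csSup_le hne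
  rintro n ⟨α, rfl⟩
  exact hbound α
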